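/- Let θ = 2π/5, so cos θ = (√5 − 1)/4. Then the position function of a regular pentagon, φ(k) = e^{2πik/5} for k ∈ ℤ/5, satisfies at each vertex k the equation (γ/2)·(φ(k+1) + φ(k−1) − 2φ(k))² = (φ(k+1) − φ(k))² + (φ(k−1) − φ(k))² with constant γ = −2/√5. -/

import Mathlib

private lemma pow_mod_five (ζ : ℂ) (h : ζ ^ 5 = 1) (n : ℕ) : ζ ^ (n % 5) = ζ ^ n := by
  conv_rhs => rw [← Nat.mod_add_div n 5]
  rw [pow_add, pow_mul, h, one_pow, mul_one]

theorem stmt18 (φ : ZMod 5 → ℂ)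
    (hφ : ∀ k : ZMod 5, φ k = Complex.exp (2 * Real.pi * Complex.I * (k.val : ℂ) / 5)) :
    Real.cos (2 * Real.pi / 5) = (Real.sqrt 5 - 1) / 4 ∧
    ∀ k : ZMod 5,
      (((-2 / Real.sqrt 5 : ℝ) : ℂ) / 2) * (φ (k + 1) + φ (k - 1) - 2 * φ k) ^ 2
        = (φ (k + 1) - φ k) ^ 2 + (φ (k - 1) - φ k) ^ 2 := by
  have h5 : Real.sqrt 5 ^ 2 = 5 := Real.sq_sqrt (by norm_num)
  have hspos : (0:ℝ) < Real.sqrt 5 := Real.sqrt_pos.mpr (by norm_num)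
  have hcos : Real.cos (2 * Real.pi / 5) = (Real.sqrt 5 - 1) / 4 := by
    have h1 : Real.cos (Real.pi / 5) = (1 + Real.sqrt 5) / 4 := Real.cos_pi_div_five
    have h2 : (2 * Real.pi / 5) = 2 * (Real.pi / 5) := by ring
    rw [h2, Real.cos_two_mul, h1]
    nlinarith [h5]
  refine ⟨hcos, ?_⟩
  set s : ℝ := Real.sqrt 5 with hs
  set ζ : ℂ := Complex.exp (2 * Real.pi * Complex.I / 5) with hζ
  have hζ5 : ζ ^ 5 = 1 := by
    rw [hζ, ← Complex.exp_nat_mul]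
    rw [show ((5:ℕ):ℂ) * (2 * Real.pi * Complex.I / 5) = 2 * Real.pi * Complex.I by
      push_cast; ring]
    exact Complex.exp_two_pi_mul_I
  have hφ' : ∀ n : ZMod 5, φ n = ζ ^ n.val := by
    intro n
    rw [hφ, hζ, ← Complex.exp_nat_mul]
    congr 1
    ring
  -- key: ζ + ζ^4 = 2 cos(2π/5)
  have hz1 : ζ = Complex.exp ((2 * Real.pi / 5 : ℝ) * Complex.I) := by
    rw [hζ]; congr 1; push_cast; ring
  have hz4 : ζ ^ 4 = Complex.exp ((-(2 * Real.pi / 5) : ℝ) * Complex.I) := by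
    rw [hζ, ← Complex.exp_nat_mul]
    rw [show ((4:ℕ):ℂ) * (2 * Real.pi * Complex.I / 5)
        = ((-(2 * Real.pi / 5) : ℝ) * Complex.I) + 2 * Real.pi * Complex.I by
      push_cast; ring]
    rw [Complex.exp_add, Complex.exp_two_pi_mul_I, mul_one]
  have hkey : 2 * ζ + 2 * ζ ^ 4 = ((s : ℝ) : ℂ) - 1 := by
    rw [hz4, hz1, Complex.exp_mul_I, Complex.exp_mul_I, Complex.ofReal_neg,
      Complex.cos_neg, Complex.sin_neg, ← Complex.ofReal_cos, hcos]
    push_cast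
    ring
  have hs2 : ((s : ℝ) : ℂ) ^ 2 = 5 := by
    rw [← Complex.ofReal_pow, h5]; norm_num
  have hs0 : ((s : ℝ) : ℂ) ≠ 0 := by
    simpa using hspos.ne'
  set S : ℂ := ((s : ℝ) : ℂ) with hS
  -- main scalar identity
  have hmain : -(ζ + ζ ^ 4 - 2) ^ 2 = S * ((ζ - 1) ^ 2 + (ζ ^ 4 - 1) ^ 2) := by
    linear_combination (2 * S) * hζ5
      + ((2 + S) - (S ^ 2 - 1) / 2 - (1 + S) * (2 * ζ + 2 * ζ ^ 4 - S + 1) / 4) * hkey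
      + ((5 - S) / 4) * hs2
  intro k
  have hk1 : φ (k + 1) = ζ * φ k := by
    rw [hφ', hφ', ZMod.val_add, pow_mod_five ζ hζ5]
    rw [show (1 : ZMod 5).val = 1 from rfl, pow_add, pow_one, mul_comm]
  have hk4 : φ (k - 1) = ζ ^ 4 * φ k := by
    rw [show k - 1 = k + 4 by rw [show (4:ZMod 5) = -1 by decide, sub_eq_add_neg], hφ', hφ', ZMod.val_add, pow_mod_five ζ hζ5]
    rw [show (4 : ZMod 5).val = 4 from rfl, pow_add, mul_comm]
  rw [hk1, hk4]
  have hcast : ((-2 / s : ℝ) : ℂ) = -2 / S := by push_cast; ring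
  rw [hcast]
  field_simp
  linear_combination ((φ k) ^ 2) * hmain
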